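/- arXiv:1512.09299 — 2 statements merged into one kernel-verified Lean document; each statement's English description precedes it below -/
import Mathlib

section
/- Let μ < λ be infinite cardinals. Then λ⁺ ↠_{Q¹} μ⁺ holds if and only if Chang's conjecture (λ⁺, λ) ↠ (μ⁺, μ) holds. -/
/- Magidor–Malitz quantifier machinery -/

open FirstOrder Cardinal

universe u

namespace MMPaper

/-- `M ⊨ Qⁿ φ(x₀,…,x_{n-1}, p)` : there is a set `A ⊆ M` with `|A| = |M|` such that
`φ(a₀,…,a_{n-1}, p)` holds for all `a₀,…,a_{n-1} ∈ A`. -/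
def QSat {L : FirstOrder.Language.{u, u}} {M : Type u} [L.Structure M] (n : ℕ)
    (φ : L.Formula (Fin n ⊕ ℕ)) (p : ℕ → M) : Prop :=
  ∃ A : Set M, #A = #M ∧
    ∀ a : Fin n → M, (∀ i, a i ∈ A) → φ.Realize (Sum.elim a p)

/-- `N ≺_{Qⁿ} M` : `N` is a (first-order) elementary substructure of `M` which moreover
preserves the Magidor–Malitz quantifier `Qⁿ` for all formulas with parameters from `N`. -/
def QElem {L : FirstOrder.Language.{u, u}} {M : Type u} [L.Structure M] (n : ℕ)
    (N : L.ElementarySubstructure M) : Prop :=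
  ∀ (φ : L.Formula (Fin n ⊕ ℕ)) (p : ℕ → N),
    QSat n φ p ↔ QSat n φ (fun i => (p i : M))

/-- `λ ↠_{Qⁿ} μ` (with languages of cardinality `≤ η`) : every structure of cardinality `lam`
over a language of cardinality at most `eta` has a `Qⁿ`-elementary substructure of
cardinality `mu`. -/
def QRef (n : ℕ) (lam mu eta : Cardinal.{u}) : Prop :=
  ∀ (L : FirstOrder.Language.{u, u}), L.card ≤ eta →
    ∀ (M : Type u) [L.Structure M], #M = lam →
      ∃ N : L.ElementarySubstructure M, QElem n N ∧ #N = mu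

/-- Chang's conjecture `(k, l) ↠ (m, n)` : every structure of cardinality `k` over a countable
language with a distinguished unary predicate of cardinality `l` has an elementary
substructure of cardinality `m` in which the predicate has cardinality `n`. -/
def ChangCC (k l m n : Cardinal.{u}) : Prop :=
  ∀ (L : FirstOrder.Language.{u, u}), L.card ≤ ℵ₀ →
    ∀ (M : Type u) [L.Structure M] (r : L.Relations 1),
      #M = k → #{x : M | Language.Structure.RelMap r ![x]} = l →
      ∃ N : L.ElementarySubstructure M, #N = m ∧
        #{x : N | Language.Structure.RelMap r ![(x : M)]} = n

attribute [local instance] Classical.propDecidable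

/-- solution set of a one-variable formula with parameters -/
def sol {L : FirstOrder.Language.{u,u}} (M : Type u) [L.Structure M]
    (φ : L.Formula (Fin 1 ⊕ ℕ)) (p : ℕ → M) : Set M :=
  {x : M | φ.Realize (Sum.elim (fun _ => x) p)}

lemma qSat_one_iff {L : FirstOrder.Language.{u,u}} {M : Type u} [L.Structure M]
    (φ : L.Formula (Fin 1 ⊕ ℕ)) (p : ℕ → M) :
    QSat 1 φ p ↔ #M ≤ #(sol M φ p) := by
  constructor
  · rintro ⟨A, hA, h⟩
    rw [← hA]
    apply Cardinal.mk_le_mk_of_subset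
    intro x hx
    exact h (fun _ => x) (fun _ => hx)
  · intro h
    refine ⟨sol M φ p, le_antisymm (Cardinal.mk_set_le _) h, fun a ha => ?_⟩
    have h0 : a = fun _ => a 0 := funext fun i => by rw [Fin.fin_one_eq_zero i]
    rw [h0]
    exact ha 0

lemma exists_fin_formula {L : FirstOrder.Language.{u,u}} (φ : L.Formula (Fin 1 ⊕ ℕ)) :
    ∃ (n : ℕ) (ψ : L.Formula (Fin 1 ⊕ Fin n)),
      ∀ (M : Type u) (_ : L.Structure M) (a : Fin 1 → M) (p : ℕ → M),
        ψ.Realize (Sum.elim a (fun j : Fin n => p j)) ↔ φ.Realize (Sum.elim a p) := by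
  classical
  set n : ℕ := φ.freeVarFinset.sup (Sum.elim (fun _ => 0) Nat.succ) with hn
  have hbound : ∀ k : ℕ, Sum.inr k ∈ φ.freeVarFinset → k < n := by
    intro k hk
    exact Finset.le_sup (f := Sum.elim (fun _ => 0) Nat.succ) hk
  set t : Set (Fin 1 ⊕ ℕ) := ↑φ.freeVarFinset with ht
  have hsub : ↑φ.freeVarFinset ⊆ t := subset_rfl
  set g : t → Fin 1 ⊕ Fin n := fun x =>
    match x with
    | ⟨Sum.inl i, _⟩ => Sum.inl i
    | ⟨Sum.inr k, hk⟩ => Sum.inr ⟨k, hbound k hk⟩ with hg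
  refine ⟨n, Language.Formula.relabel g (φ.restrictFreeVar (Set.inclusion hsub)), ?_⟩
  intro M _ a p
  rw [Language.Formula.realize_relabel]
  have hcomp : (Sum.elim a (fun j : Fin n => p j)) ∘ g = (Sum.elim a p) ∘ (↑) := by
    funext x
    match x with
    | ⟨Sum.inl i, _⟩ => rfl
    | ⟨Sum.inr k, hk⟩ => rfl
  show (φ.restrictFreeVar (Set.inclusion hsub)).Realize
      ((Sum.elim a fun j : Fin n => p ↑j) ∘ g) default ↔ _
  rw [hcomp]
  exact Language.BoundedFormula.realize_restrictFreeVar' hsub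

lemma exists_reduct {L L' : FirstOrder.Language.{u,u}} (ρ : L →ᴸ L') {M : Type u}
    [L.Structure M] [L'.Structure M] [ρ.IsExpansionOn M]
    (N : L'.ElementarySubstructure M) :
    ∃ N' : L.ElementarySubstructure M, (N' : Set M) = (N : Set M) := by
  have fun_mem : ∀ {n}, ∀ f : L.Functions n, Language.ClosedUnder f (N : Set M) := by
    intro n f x hx
    have h := N.toSubstructure.fun_mem (ρ.onFunction f) x hx
    rwa [ρ.map_onFunction] at h
  set S : L.Substructure M := ⟨(N : Set M), fun_mem⟩ with hS
  have hElem : S.IsElementary := by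
    apply Language.Substructure.isElementary_of_exists
    intro n ψ x a h
    have h' : (ρ.onBoundedFormula ψ).Realize default (Fin.snoc ((↑) ∘ x) a) :=
      (ρ.realize_onBoundedFormula ψ).2 h
    set x' : Fin n → N := fun i => ⟨(x i : M), (x i).2⟩ with hx'
    have hcoe : ((↑) : S → M) ∘ x = ((↑) : N → M) ∘ x' := rfl
    have hM : (ρ.onBoundedFormula ψ).ex.Realize (default : Empty → M) ((↑) ∘ x') := by
      rw [Language.BoundedFormula.realize_ex]
      exact ⟨a, by rw [← hcoe]; exact h'⟩
    have hd : ((↑) : N → M) ∘ (default : Empty → N) = default := Subsingleton.elim _ _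
    have hN : (ρ.onBoundedFormula ψ).ex.Realize (default : Empty → N) x' := by
      have := N.subtype.map_boundedFormula (ρ.onBoundedFormula ψ).ex default x'
      rw [Language.ElementarySubstructure.coe_subtype, hd] at this
      exact this.1 hM
    rw [Language.BoundedFormula.realize_ex] at hN
    obtain ⟨b, hb⟩ := hN
    refine ⟨⟨(b : M), b.2⟩, ?_⟩
    have := (N.subtype.map_boundedFormula (ρ.onBoundedFormula ψ) default (Fin.snoc x' b)).2 hb
    rw [Language.ElementarySubstructure.coe_subtype, hd, Fin.comp_snoc] at this
    rw [hcoe]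
    exact (ρ.realize_onBoundedFormula ψ).1 this
  exact ⟨⟨S, hElem⟩, rfl⟩


attribute [local instance] Classical.propDecidable

def ExFun (L : FirstOrder.Language.{u,u}) : ℕ → Type u
  | 0 => PEmpty
  | (n+1) => L.Formula (Fin 1 ⊕ Fin n) × Bool

def ExRel : ℕ → Type u
  | 1 => PUnit
  | _ => PEmpty

def Extra (L : FirstOrder.Language.{u,u}) : FirstOrder.Language.{u,u} :=
  ⟨ExFun L, ExRel⟩

lemma formula_card_le {L : FirstOrder.Language.{u,u}} (hL : L.card ≤ ℵ₀)
    (α : Type) [Finite α] : #(L.Formula α) ≤ ℵ₀ := by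
  have h1 : #(L.Formula α) ≤ #(Σ n, L.BoundedFormula α n) :=
    Cardinal.mk_le_of_injective (f := fun φ => ⟨0, φ⟩)
      (fun a b h => by simpa using h)
  refine h1.trans ((Language.BoundedFormula.card_le).trans ?_)
  haveI : Countable α := Finite.to_countable
  have h2 : Cardinal.lift.{u} #α ≤ ℵ₀ := by
    have := Cardinal.mk_le_aleph0 (α := α)
    calc Cardinal.lift.{u} #α ≤ Cardinal.lift.{u} ℵ₀ := Cardinal.lift_le.2 this
      _ = ℵ₀ := Cardinal.lift_aleph0
  have h3 : Cardinal.lift.{0} L.card ≤ ℵ₀ := by rwa [Cardinal.lift_uzero]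
  calc max ℵ₀ (Cardinal.lift.{u} #α + Cardinal.lift.{0} L.card)
      ≤ max ℵ₀ (ℵ₀ + ℵ₀) := by gcongr
    _ = ℵ₀ := by simp [Cardinal.aleph0_add_aleph0]

lemma extra_countable {L : FirstOrder.Language.{u,u}} (hL : L.card ≤ ℵ₀) :
    (L.sum (Extra L)).card ≤ ℵ₀ := by
  haveI hF : ∀ n, Countable (ExFun L n) := by
    intro n
    match n with
    | 0 => exact (inferInstance : Countable PEmpty)
    | (m+1) =>
      haveI : Countable (L.Formula (Fin 1 ⊕ Fin m)) :=
        Cardinal.mk_le_aleph0_iff.1 (formula_card_le hL _)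
      exact (inferInstance : Countable (L.Formula (Fin 1 ⊕ Fin m) × Bool))
  haveI hR : ∀ n, Countable (ExRel n) := by
    intro n
    match n with
    | 0 => exact (inferInstance : Countable PEmpty)
    | 1 => exact (inferInstance : Countable PUnit)
    | (m+2) => exact (inferInstance : Countable PEmpty)
  have hE : (Extra L).card ≤ ℵ₀ := by
    haveI : Countable (Σ l, ExFun L l) := inferInstance
    haveI : Countable (Σ l, ExRel l) := inferInstance
    show #((Σ l, ExFun L l) ⊕ (Σ l, ExRel l)) ≤ ℵ₀
    exact Cardinal.mk_le_aleph0
  rw [Language.card_sum]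
  calc Cardinal.lift.{u} L.card + Cardinal.lift.{u} (Extra L).card
      ≤ ℵ₀ + ℵ₀ := by
        gcongr <;> simp only [Cardinal.lift_id] <;> assumption
    _ = ℵ₀ := Cardinal.aleph0_add_aleph0

variable {L : FirstOrder.Language.{u,u}} (M : Type u) [L.Structure M]

/-- solution set of `ψ(x, p)` -/
def sol' {n : ℕ} (ψ : L.Formula (Fin 1 ⊕ Fin n)) (p : Fin n → M) : Set M :=
  {x : M | ψ.Realize (Sum.elim (fun _ => x) p)}

noncomputable def Hfun {n : ℕ} (ψ : L.Formula (Fin 1 ⊕ Fin n)) (p : Fin n → M) : M → M :=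
  if h : Nonempty (M ↪ (sol' M ψ p)) then fun x => (h.some x : M) else id

lemma Hfun_spec {n : ℕ} {ψ : L.Formula (Fin 1 ⊕ Fin n)} {p : Fin n → M}
    (h : #M ≤ #(sol' M ψ p)) :
    Function.Injective (Hfun M ψ p) ∧ ∀ x, Hfun M ψ p x ∈ sol' M ψ p := by
  have hne : Nonempty (M ↪ (sol' M ψ p)) := Cardinal.le_def _ _ |>.1 h
  rw [Hfun, dif_pos hne]
  exact ⟨fun x y hxy => hne.some.injective (Subtype.val_injective hxy),
    fun x => (hne.some x).2⟩

noncomputable def Gfun (A : Set M) {n : ℕ} (ψ : L.Formula (Fin 1 ⊕ Fin n))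
    (p : Fin n → M) : M → M :=
  if h : Nonempty ((sol' M ψ p) ↪ A) then
    fun x => if hx : x ∈ sol' M ψ p then (h.some ⟨x, hx⟩ : M) else x
  else id

lemma Gfun_spec {A : Set M} {n : ℕ} {ψ : L.Formula (Fin 1 ⊕ Fin n)} {p : Fin n → M}
    (h : Nonempty ((sol' M ψ p) ↪ A)) :
    (∀ x ∈ sol' M ψ p, Gfun M A ψ p x ∈ A) ∧ Set.InjOn (Gfun M A ψ p) (sol' M ψ p) := by
  rw [Gfun, dif_pos h]
  constructor
  · intro x hx
    rw [dif_pos hx]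
    exact (h.some ⟨x, hx⟩).2
  · intro x hx y hy hxy
    simp only [dif_pos hx, dif_pos hy] at hxy
    have h2 := h.some.injective (Subtype.val_injective hxy)
    exact congrArg Subtype.val h2

/-- the distinguished unary predicate symbol -/
def predSym (L : FirstOrder.Language.{u,u}) : (L.sum (Extra L)).Relations 1 :=
  Sum.inr (show ExRel 1 from PUnit.unit)

/-- the `H_ψ`/`G_ψ` function symbols -/
def funSym (L : FirstOrder.Language.{u,u}) {n : ℕ} (ψ : L.Formula (Fin 1 ⊕ Fin n))
    (b : Bool) : (L.sum (Extra L)).Functions (n+1) :=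
  Sum.inr (show ExFun L (n+1) from (ψ, b))

noncomputable def extraStructure (A : Set M) : (Extra L).Structure M where
  funMap := fun {m} f v =>
    match m, f with
    | (n+1), (ψ, true) => Hfun M ψ (fun j => v j.castSucc) (v (Fin.last n))
    | (n+1), (ψ, false) => Gfun M A ψ (fun j => v j.castSucc) (v (Fin.last n))
  RelMap := fun {m} R v =>
    match m, R with
    | 1, _ => v 0 ∈ A


lemma dir2 (lam mu : Cardinal.{u}) (hmu : ℵ₀ ≤ mu) (hlt : mu < lam)
    (hCC : ChangCC (Order.succ lam) lam (Order.succ mu) mu) :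
    QRef 1 (Order.succ lam) (Order.succ mu) ℵ₀ := by
  intro L hL M _ hM
  obtain ⟨A, hA⟩ : ∃ A : Set M, #A = lam := by
    rw [← Cardinal.le_mk_iff_exists_set, hM]
    exact le_of_lt (Order.lt_succ lam)
  letI : (Extra L).Structure M := extraStructure M A
  have hL2 := extra_countable (L := L) hL
  have hsetA : {x : M | Language.Structure.RelMap
      (predSym L) ![x]} = A := by
    ext x
    rfl
  have hA' : #{x : M | Language.Structure.RelMap
      (predSym L) ![x]} = lam := by
    rw [hsetA, hA]
  obtain ⟨N, hNcard, hNA⟩ := hCC (L.sum (Extra L)) hL2 M (predSym L) hM hA'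
  obtain ⟨N', hN'⟩ := exists_reduct (Language.LHom.sumInl (L := L) (L' := Extra L)) N
  have hmemNN : ∀ x : M, x ∈ N' ↔ x ∈ N := by
    intro x
    rw [← SetLike.mem_coe, hN', SetLike.mem_coe]
  have hcardNN : #N' = #N := Cardinal.mk_congr (Equiv.setCongr hN')
  refine ⟨N', ?_, by rw [hcardNN, hNcard]⟩
  intro φ p
  obtain ⟨n, ψ, hψ⟩ := exists_fin_formula φ
  set pM : ℕ → M := fun i => (p i : M) with hpM
  set pn : Fin n → M := fun j => pM j with hpn
  have hsolM : sol M φ pM = sol' M ψ pn := by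
    ext x
    exact (hψ M inferInstance (fun _ => x) pM).symm
  have hsolN : ∀ x : N', (x ∈ sol N' φ p ↔ (x : M) ∈ sol' M ψ pn) := by
    intro x
    have h1 : (x ∈ sol N' φ p) ↔ ψ.Realize (Sum.elim (fun _ => x) (fun j : Fin n => p j)) :=
      (hψ N' inferInstance (fun _ => x) p).symm
    rw [h1]
    have h2 := N'.subtype.map_formula ψ (Sum.elim (fun _ => x) (fun j : Fin n => p j))
    rw [Language.ElementarySubstructure.coe_subtype] at h2
    rw [← h2]
    have h3 : ((↑) : N' → M) ∘ (Sum.elim (fun _ : Fin 1 => x) (fun j : Fin n => p j))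
        = Sum.elim (fun _ : Fin 1 => (x : M)) pn := by
      funext i
      cases i <;> rfl
    rw [h3]
    rfl
  have hsolN' : #(sol N' φ p) = #{x : N' | (x : M) ∈ sol' M ψ pn} := by
    apply Cardinal.mk_congr
    apply Equiv.setCongr
    ext x
    exact hsolN x
  have hargs : ∀ x : M, x ∈ N → ∀ i, (Fin.snoc pn x : Fin (n+1) → M) i ∈ N := by
    intro x hx i
    refine Fin.lastCases ?_ ?_ i
    · rw [Fin.snoc_last]; exact hx
    · intro j
      rw [Fin.snoc_castSucc]
      exact (hmemNN _).1 (p j).2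
  show QSat 1 φ p ↔ QSat 1 φ pM
  rw [qSat_one_iff, qSat_one_iff, hsolM, hsolN']
  by_cases h : #M ≤ #(sol' M ψ pn)
  · refine ⟨fun _ => h, fun _ => ?_⟩
    have hH := Hfun_spec M (ψ := ψ) (p := pn) h
    have hmem : ∀ x : M, x ∈ N → Hfun M ψ pn x ∈ N := by
      intro x hx
      have hfun := N.toSubstructure.fun_mem (funSym L ψ true) (Fin.snoc pn x) (hargs x hx)
      have heq : Language.Structure.funMap (M := M) (funSym L ψ true) (Fin.snoc pn x)
          = Hfun M ψ pn x := by
        show Hfun M ψ (fun j => (Fin.snoc pn x : Fin (n+1) → M) j.castSucc) ((Fin.snoc pn x : Fin (n+1) → M) (Fin.last n)) = _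
        rw [Fin.snoc_last]
        congr 1
        funext j
        rw [Fin.snoc_castSucc]
      rwa [heq] at hfun
    refine Cardinal.mk_le_of_injective (f := fun x : N' =>
      (⟨⟨Hfun M ψ pn (x : M), (hmemNN _).2 (hmem _ ((hmemNN _).1 x.2))⟩, hH.2 (x : M)⟩ :
        {x : N' | (x : M) ∈ sol' M ψ pn})) ?_
    intro a b hab
    have h4 : Hfun M ψ pn (a : M) = Hfun M ψ pn (b : M) :=
      congrArg (fun z : {x : N' | (x : M) ∈ sol' M ψ pn} => ((z : N') : M)) hab
    exact Subtype.val_injective (hH.1 h4)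
  · have hle : #(sol' M ψ pn) ≤ lam := by
      have hlt2 : #(sol' M ψ pn) < #M := lt_of_not_ge h
      rw [hM] at hlt2
      exact Order.lt_succ_iff.1 hlt2
    have hemb : Nonempty ((sol' M ψ pn) ↪ A) := by
      apply (Cardinal.le_def _ _).1
      rw [hA]
      exact hle
    have hG := Gfun_spec M (A := A) (ψ := ψ) (p := pn) hemb
    have hmem : ∀ x : M, x ∈ N → Gfun M A ψ pn x ∈ N := by
      intro x hx
      have hfun := N.toSubstructure.fun_mem (funSym L ψ false) (Fin.snoc pn x) (hargs x hx)
      have heq : Language.Structure.funMap (M := M) (funSym L ψ false) (Fin.snoc pn x)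
          = Gfun M A ψ pn x := by
        show Gfun M A ψ (fun j => (Fin.snoc pn x : Fin (n+1) → M) j.castSucc) ((Fin.snoc pn x : Fin (n+1) → M) (Fin.last n)) = _
        rw [Fin.snoc_last]
        congr 1
        funext j
        rw [Fin.snoc_castSucc]
      rwa [heq] at hfun
    refine ⟨fun hq => ?_, fun hq => absurd hq h⟩
    exfalso
    have hinj : #{x : N' | (x : M) ∈ sol' M ψ pn}
        ≤ #{x : N | Language.Structure.RelMap (predSym L) ![(x : M)]} := by
      refine Cardinal.mk_le_of_injective (f := fun z : {x : N' | (x : M) ∈ sol' M ψ pn} =>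
        (⟨⟨Gfun M A ψ pn ((z : N') : M), hmem _ ((hmemNN _).1 (z : N').2)⟩,
          show Gfun M A ψ pn ((z : N') : M) ∈ A from hG.1 _ z.2⟩ :
          {x : N | Language.Structure.RelMap (predSym L) ![(x : M)]})) ?_
      intro a b hab
      have h4 : Gfun M A ψ pn ((a : N') : M) = Gfun M A ψ pn ((b : N') : M) :=
        congrArg (fun z : {x : N | Language.Structure.RelMap (predSym L) ![(x : M)]} =>
          ((z : N) : M)) hab
      have h5 := hG.2 a.2 b.2 h4
      exact Subtype.val_injective (Subtype.val_injective h5)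
    rw [hNA] at hinj
    have hcontr : Order.succ mu ≤ mu := by
      calc Order.succ mu = #N' := (hcardNN.trans hNcard).symm
        _ ≤ _ := hq
        _ ≤ mu := hinj
    exact absurd hcontr (not_le.2 (Order.lt_succ mu))

/-! ## Direction 1: QRef → ChangCC -/

def Ex1Fun : ℕ → Type u
  | 2 => PUnit
  | _ => PEmpty

def Extra1 : FirstOrder.Language.{u,u} := ⟨Ex1Fun, fun _ => PEmpty.{u+1}⟩

def fSym (L : FirstOrder.Language.{u,u}) : (L.sum Extra1.{u}).Functions 2 :=
  Sum.inr (show Ex1Fun 2 from PUnit.unit)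

lemma extra1_countable {L : FirstOrder.Language.{u,u}} (hL : L.card ≤ ℵ₀) :
    (L.sum Extra1.{u}).card ≤ ℵ₀ := by
  haveI hF : ∀ n, Countable (Ex1Fun n) := by
    intro n
    match n with
    | 0 => exact (inferInstance : Countable PEmpty)
    | 1 => exact (inferInstance : Countable PEmpty)
    | 2 => exact (inferInstance : Countable PUnit)
    | (m+3) => exact (inferInstance : Countable PEmpty)
  have hE : Extra1.{u}.card ≤ ℵ₀ := by
    show #((Σ l, Ex1Fun l) ⊕ (Σ l, PEmpty.{u+1})) ≤ ℵ₀
    exact Cardinal.mk_le_aleph0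
  rw [Language.card_sum]
  calc Cardinal.lift.{u} L.card + Cardinal.lift.{u} Extra1.{u}.card
      ≤ ℵ₀ + ℵ₀ := by
        gcongr <;> simp only [Cardinal.lift_id] <;> assumption
    _ = ℵ₀ := Cardinal.aleph0_add_aleph0

def extra1Structure (M : Type u) (F : M → M → M) : Extra1.{u}.Structure M where
  funMap := fun {m} f v =>
    match m, f with
    | 2, _ => F (v 0) (v 1)
    | 0, f => f.elim
    | 1, f => f.elim
    | (_+3), f => f.elim
  RelMap := fun {_} R _ => R.elim

lemma exists_good_wo (M : Type u) (lam : Cardinal.{u}) (hM : #M = Order.succ lam) :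
    ∃ r : M → M → Prop, IsWellOrder M r ∧ ∀ a : M, #{b : M // r b a} ≤ lam := by
  obtain ⟨e⟩ : Nonempty (M ≃ ((#M).ord).ToType) := by
    rw [← Cardinal.eq]
    rw [Cardinal.mk_toType, Cardinal.card_ord]
  set r : M → M → Prop := fun a b => e a < e b with hr
  haveI hwo : IsWellOrder ((#M).ord).ToType (· < ·) := isWellOrder_lt
  have emb : r ↪r ((· < ·) : ((#M).ord).ToType → ((#M).ord).ToType → Prop) :=
    ⟨e.toEmbedding, Iff.rfl⟩
  haveI : IsWellOrder M r := emb.isWellOrder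
  refine ⟨r, inferInstance, ?_⟩
  intro a
  have h2 : Ordinal.typein r a < Ordinal.type r := Ordinal.typein_lt_type r a
  have h3 : Ordinal.type r = (#M).ord := by
    rw [← Ordinal.type_toType (#M).ord]
    exact Ordinal.type_eq.2 ⟨⟨e, Iff.rfl⟩⟩
  have h4 : (Ordinal.typein r a).card < #M := Cardinal.lt_ord.1 (h3 ▸ h2)
  rw [hM] at h4
  rw [Ordinal.card_typein] at *
  exact Order.lt_succ_iff.1 h4

lemma exists_big_initial {M : Type u} (r : M → M → Prop) [IsWellOrder M r]
    (S : Set M) (mu : Cardinal.{u}) (hS : #S = Order.succ mu) :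
    ∃ a : S, #{b : S // r b a} = mu := by
  set r' : S → S → Prop := fun x y => r x y with hr'
  have emb : r' ↪r r := ⟨⟨Subtype.val, Subtype.val_injective⟩, Iff.rfl⟩
  haveI : IsWellOrder S r' := emb.isWellOrder
  have hlt : Cardinal.ord mu < Ordinal.type r' := by
    by_contra hcon
    push_neg at hcon
    have h1 : (Ordinal.type r').card ≤ mu := by
      have := Ordinal.card_le_card hcon
      rwa [Cardinal.card_ord] at this
    rw [Ordinal.card_type, hS] at h1
    exact absurd h1 (not_le.2 (Order.lt_succ mu))
  refine ⟨Ordinal.enum r' ⟨Cardinal.ord mu, hlt⟩, ?_⟩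
  have h2 : Ordinal.typein r' (Ordinal.enum r' ⟨Cardinal.ord mu, hlt⟩) = Cardinal.ord mu :=
    Ordinal.typein_enum _ _
  have h3 := Ordinal.card_typein (r := r') (Ordinal.enum r' ⟨Cardinal.ord mu, hlt⟩)
  rw [h2, Cardinal.card_ord] at h3
  exact h3.symm

lemma dir1 (lam mu : Cardinal.{u}) (hmu : ℵ₀ ≤ mu) (hlt : mu < lam)
    (hQ : QRef 1 (Order.succ lam) (Order.succ mu) ℵ₀) :
    ChangCC (Order.succ lam) lam (Order.succ mu) mu := by
  intro L hL M _ r hM hr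
  obtain ⟨wo, hwoinst, hwo⟩ := exists_good_wo M lam hM
  haveI := hwoinst
  set A : Set M := {x : M | Language.Structure.RelMap r ![x]} with hA
  have hrA : #A = lam := hr
  have hAne : Nonempty A := by
    rw [← Cardinal.mk_ne_zero_iff, hrA]
    have : (0 : Cardinal.{u}) < lam := aleph0_pos.trans_le (hmu.trans hlt.le)
    exact this.ne'
  obtain ⟨a0⟩ := hAne
  have hinjA : ∀ a : M, Nonempty ({b : M // wo b a} ↪ A) := by
    intro a
    apply (Cardinal.le_def _ _).1
    rw [hrA]
    exact hwo a
  set F : M → M → M :=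
    fun a b => if h : wo b a then ((hinjA a).some ⟨b, h⟩ : M) else (a0 : M) with hF
  have hF1 : ∀ a b, F a b ∈ A := by
    intro a b
    by_cases h : wo b a
    · simp only [hF, dif_pos h]
      exact ((hinjA a).some ⟨b, h⟩).2
    · simp only [hF, dif_neg h]
      exact a0.2
  have hF2 : ∀ a b c : M, wo b a → wo c a → F a b = F a c → b = c := by
    intro a b c hb hc hbc
    simp only [hF, dif_pos hb, dif_pos hc] at hbc
    have h5 := (hinjA a).some.injective (Subtype.val_injective hbc)
    exact congrArg Subtype.val h5
  letI : Extra1.{u}.Structure M := extra1Structure M F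
  obtain ⟨N, hQE, hNcard⟩ := hQ (L.sum Extra1.{u}) (extra1_countable hL) M hM
  obtain ⟨N', hN'⟩ := exists_reduct (Language.LHom.sumInl (L := L) (L' := Extra1.{u})) N
  have hmemNN : ∀ x : M, x ∈ N' ↔ x ∈ N := by
    intro x
    rw [← SetLike.mem_coe, hN', SetLike.mem_coe]
  have hcardNN : #N' = #N := Cardinal.mk_congr (Equiv.setCongr hN')
  have hEqTarget : #{x : N' | Language.Structure.RelMap r ![(x : M)]}
      = #{x : N | Language.Structure.RelMap r ![(x : M)]} :=
    Cardinal.mk_congr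
      ⟨fun z => ⟨⟨z.1.1, (hmemNN _).1 z.1.2⟩, z.2⟩,
       fun z => ⟨⟨z.1.1, (hmemNN _).2 z.1.2⟩, z.2⟩,
       fun _ => rfl, fun _ => rfl⟩
  refine ⟨N', by rw [hcardNN, hNcard], ?_⟩
  rw [hEqTarget]
  have hFmem : ∀ x y : M, x ∈ N → y ∈ N → F x y ∈ N := by
    intro x y hx hy
    have hfun := N.toSubstructure.fun_mem (fSym L) ![x, y] ?_
    · have heq : Language.Structure.funMap (M := M) (fSym L) ![x, y] = F x y := by
        show F (![x, y] 0) (![x, y] 1) = F x y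
        rw [show (![x, y] : Fin 2 → M) 0 = x from rfl,
          show (![x, y] : Fin 2 → M) 1 = y from rfl]
      rwa [heq] at hfun
    · intro i
      fin_cases i
      · exact hx
      · exact hy
  have hub : #{x : N | Language.Structure.RelMap r ![(x : M)]} ≤ mu := by
    set φr : (L.sum Extra1.{u}).Formula (Fin 1 ⊕ ℕ) :=
      Language.Relations.formula₁ (show (L.sum Extra1.{u}).Relations 1 from Sum.inl r) (Language.Term.var (Sum.inl 0)) with hφr
    have hp0 : Nonempty N := by
      rw [← Cardinal.mk_ne_zero_iff, hNcard]
      have : (0 : Cardinal.{u}) < Order.succ mu :=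
        (aleph0_pos.trans_le hmu).trans (Order.lt_succ mu)
      exact this.ne'
    set p0 : ℕ → N := fun _ => Classical.choice hp0 with hp0'
    have hiff := hQE φr p0
    have hsolM : sol M φr (fun i => (p0 i : M)) = A := by
      ext x
      show φr.Realize (Sum.elim (fun _ => x) _) ↔ _
      rw [hφr, Language.Formula.realize_rel₁]
      exact Iff.rfl
    have hMfalse : ¬ QSat 1 φr (fun i => (p0 i : M)) := by
      rw [qSat_one_iff, hsolM, hM, hrA]
      intro hcon
      exact absurd (hcon.trans_lt (Order.lt_succ lam)) (lt_irrefl _)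
    have hNfalse : ¬ QSat 1 φr p0 := fun hq => hMfalse (hiff.1 hq)
    rw [qSat_one_iff] at hNfalse
    push_neg at hNfalse
    have hvec : ∀ x : N, (fun i : Fin 1 => (((![x] : Fin 1 → N) i) : M)) = ![(x : M)] := by
      intro x
      funext i
      fin_cases i
      rfl
    have hsolNset : {x : N | Language.Structure.RelMap r ![(x : M)]} = sol N φr p0 := by
      ext x
      show Language.Structure.RelMap r ![(x : M)] ↔ φr.Realize (Sum.elim (fun _ => x) p0)
      rw [hφr, Language.Formula.realize_rel₁]
      simp only [Language.Term.realize_var, Sum.elim_inl]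
      show _ ↔ Language.Structure.RelMap r (fun i : Fin 1 => (((![x] : Fin 1 → N) i) : M))
      rw [hvec x]
    rw [hsolNset]
    rw [hNcard] at hNfalse
    exact Order.lt_succ_iff.1 hNfalse
  have hScard : #((N : Set M) : Type u) = Order.succ mu := hNcard
  obtain ⟨a, ha⟩ := exists_big_initial wo (N : Set M) mu hScard
  have hlb : mu ≤ #{x : N | Language.Structure.RelMap r ![(x : M)]} := by
    rw [← ha]
    refine Cardinal.mk_le_of_injective (f := fun b : {b : ((N : Set M) : Type u) // wo b a} =>
      (⟨⟨F (a : M) ((b : (N : Set M)) : M),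
          hFmem _ _ (a.2) ((b : (N : Set M)).2)⟩,
        hF1 (a : M) ((b : (N : Set M)) : M)⟩ :
        {x : N | Language.Structure.RelMap r ![(x : M)]})) ?_
    intro b c hbc
    have h6 : F (a : M) ((b : (N : Set M)) : M) = F (a : M) ((c : (N : Set M)) : M) :=
      congrArg (fun z : {x : N | Language.Structure.RelMap r ![(x : M)]} => ((z : N) : M)) hbc
    have h7 := hF2 (a : M) _ _ b.2 c.2 h6
    exact Subtype.val_injective (Subtype.val_injective h7)
  exact le_antisymm hub hlb


/-- For infinite cardinals `μ < λ`, `λ⁺ ↠_{Q¹} μ⁺` holds iff Chang's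
conjecture `(λ⁺, λ) ↠ (μ⁺, μ)` holds. -/
theorem q1_reflection_iff_changCC (lam mu : Cardinal.{u})
    (hmu : ℵ₀ ≤ mu) (hlt : mu < lam) :
    QRef 1 (Order.succ lam) (Order.succ mu) ℵ₀ ↔
      ChangCC (Order.succ lam) lam (Order.succ mu) mu :=
  ⟨dir1 lam mu hmu hlt, dir2 lam mu hmu hlt⟩

end MMPaper
end

section
/- Assume λ ↠_{Q¹} μ, where μ ≤ λ are infinite cardinals. Then for every first-order structure 𝒜 over a countable language whose universe is a set of ordinals of order type λ, and whose language contains a binary relation interpreted as the usual ordering of the ordinals, there is an elementary substructure ℬ ≺ 𝒜 whose universe has order type exactly μ. -/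
/- Magidor–Malitz quantifier machinery -/

open FirstOrder Cardinal

universe u

namespace MMPaper

/-- Assume `λ ↠_{Q¹} μ` for infinite cardinals `μ ≤ λ`.  Then every structure
over a countable language whose universe is a set of ordinals of order type `λ`, whose
language contains a binary relation symbol interpreted as the usual order of the ordinals,
has an elementary substructure whose universe has order type exactly `μ`. -/
theorem elementary_substructure_of_ordertype (lam mu : Cardinal.{u + 1})
    (hmu : ℵ₀ ≤ mu) (hle : mu ≤ lam)
    (h : QRef 1 lam mu ℵ₀)
    (L : FirstOrder.Language.{u + 1, u + 1}) (hL : L.card ≤ ℵ₀)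
    (S : Set Ordinal.{u}) [L.Structure S]
    (hS : Ordinal.type ((· < ·) : S → S → Prop) = lam.ord)
    (r : L.Relations 2)
    (hr : ∀ x y : S, Language.Structure.RelMap r ![x, y] ↔ (x : Ordinal.{u}) < y) :
    ∃ N : L.ElementarySubstructure S,
      Ordinal.type
        ((· < ·) : {o : Ordinal.{u} // ∃ x : S, x ∈ N ∧ (x : Ordinal.{u}) = o} →
          {o : Ordinal.{u} // ∃ x : S, x ∈ N ∧ (x : Ordinal.{u}) = o} → Prop) = mu.ord := by
  have hcard : #S = lam := by
    have h0 := congrArg Ordinal.card hS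
    rwa [Ordinal.card_type, Cardinal.card_ord] at h0
  obtain ⟨N, hQ, hNcard⟩ := h L hL S hcard
  refine ⟨N, ?_⟩
  set T := {o : Ordinal.{u} // ∃ x : S, x ∈ N ∧ (x : Ordinal.{u}) = o} with hT
  let rN : ↥N → ↥N → Prop := fun x y => ((x : S) : Ordinal.{u}) < ((y : S) : Ordinal.{u})
  let f : ↥N → T := fun x => ⟨((x : S) : Ordinal.{u}), ⟨(x : S), x.2, rfl⟩⟩
  have hbij : Function.Bijective f := by
    constructor
    · intro x y hxy
      have h1 := Subtype.ext_iff.mp hxy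
      exact Subtype.ext (Subtype.ext h1)
    · rintro ⟨o, x, hx, rfl⟩
      exact ⟨⟨x, hx⟩, rfl⟩
  let g : rN ≃r ((· < ·) : T → T → Prop) := ⟨Equiv.ofBijective f hbij, Iff.rfl⟩
  haveI : IsWellOrder ↥N rN := g.toRelEmbedding.isWellOrder
  rw [← g.ordinal_type_eq]
  have hcardN : Ordinal.card (Ordinal.type rN) = mu := by
    rw [Ordinal.card_type, hNcard]
  refine le_antisymm ?_ ?_
  · -- type rN ≤ mu.ord
    by_contra hlt
    push_neg at hlt
    obtain ⟨b, hb⟩ := Ordinal.typein_surj rN hlt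
    let φ : L.Formula (Fin 1 ⊕ ℕ) :=
      r.formula₂ (Language.Term.var (Sum.inl 0)) (Language.Term.var (Sum.inr 0))
    let p : ℕ → ↥N := fun _ => b
    have hQsatN : QSat 1 φ p := by
      refine ⟨{y : ↥N | rN y b}, ?_, ?_⟩
      · have h1 : #{y : ↥N // rN y b} = mu := by
          rw [← Ordinal.card_typein, hb, Cardinal.card_ord]
        rw [hNcard]
        exact h1
      · intro a ha
        have hmf := (N.subtype).map_formula φ (Sum.elim a p)
        rw [← hmf]
        have : φ.Realize ((N.subtype) ∘ Sum.elim a p) ↔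
            Language.Structure.RelMap r ![(↑(a 0) : S), (↑b : S)] := by
          simp only [φ, Language.Formula.realize_rel₂, Language.Term.realize_var,
            Function.comp_apply, Sum.elim_inl, Sum.elim_inr,
            Language.ElementarySubstructure.subtype_apply, p]
        rw [this, hr]
        exact ha 0
    have hQsatS := (hQ φ p).1 hQsatN
    obtain ⟨A, hA, hall⟩ := hQsatS
    have habove : ∀ a : S, a ∈ A → (a : Ordinal.{u}) < ((b : S) : Ordinal.{u}) := by
      intro a haA
      have := hall (fun _ => a) (fun _ => haA)
      have hre : Language.Formula.Realize φ (Sum.elim (fun _ => a) fun i => ((p i : S))) ↔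
          Language.Structure.RelMap r ![a, (↑b : S)] := by
        simp only [φ, Language.Formula.realize_rel₂, Language.Term.realize_var,
          Sum.elim_inl, Sum.elim_inr, p]
      rw [hre, hr] at this
      exact this
    have hAle : #A ≤ #{y : S // ((· < ·) : S → S → Prop) y (↑b : S)} := by
      refine Cardinal.mk_le_of_injective (f := fun a : A => ⟨a.1, habove a.1 a.2⟩) ?_
      intro x y hxy
      have h1 := Subtype.ext_iff.mp hxy
      exact Subtype.ext h1
    have hAlt : #{y : S // ((· < ·) : S → S → Prop) y (↑b : S)} < lam := by
      rw [← Ordinal.card_typein]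
      exact Cardinal.lt_ord.1 (hS ▸ Ordinal.typein_lt_type _ _)
    rw [hA, hcard] at hAle
    exact absurd (lt_of_le_of_lt hAle hAlt) (lt_irrefl lam)
  · -- mu.ord ≤ type rN
    rw [← hcardN]
    exact Cardinal.ord_card_le _

end MMPaper
end
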